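/- arXiv:1310.6505 — 5 statements merged into one kernel-verified Lean document; each statement's English description precedes it below -/
import Mathlib

section
/- Let 0 < ρ < 1 and let I ⊂ ℝ be a compact interval. There exists a constant c depending only on k and ρ such that for every polynomial Q of degree less than k and every measurable subset A ⊆ I with |A| ≥ ρ|I|, we have sup_{t ∈ I} |Q(t)| ≤ c · sup_{t ∈ A} |Q(t)|. -/
open MeasureTheory Set

lemma remez_sep_points (k : ℕ) (hk : 0 < k) {a b : ℝ} (hab : a < b)
    {A : Set ℝ} (hA : A ⊆ Set.Icc a b) (mA : MeasurableSet A)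
    (hpos : 0 < (volume A).toReal) :
    ∃ v : Fin k → ℝ, (∀ i, v i ∈ A) ∧
      ∀ i j : Fin k, i < j → (volume A).toReal / (2 * k) ≤ v j - v i := by
  set M := (volume A).toReal with hM
  have hk' : (0:ℝ) < 2 * k := by positivity
  set δ := M / (2 * k) with hδ
  have hδpos : 0 < δ := div_pos hpos hk'
  have hfin : ∀ S : Set ℝ, S ⊆ A → volume S ≠ ⊤ := by
    intro S hS
    have h1 : volume S ≤ volume (Set.Icc a b) := measure_mono (hS.trans hA)
    exact ne_top_of_le_ne_top (by simp [Real.volume_Icc]) h1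
  set F : ℝ → ℝ := fun t => (volume (A ∩ Set.Iic t)).toReal with hF
  have hFmono : Monotone F := fun s t hst =>
    ENNReal.toReal_mono (hfin _ inter_subset_left)
      (measure_mono (inter_subset_inter_right _ (Iic_subset_Iic.mpr hst)))
  have hadd : ∀ x y : ℝ, x ≤ y → (volume (A ∩ Set.Ioc x y)).toReal = F y - F x := by
    intro x y hxy
    have hsplit : A ∩ Set.Iic y = (A ∩ Set.Iic x) ∪ (A ∩ Set.Ioc x y) := by
      rw [← inter_union_distrib_left, Set.Iic_union_Ioc_eq_Iic hxy]
    have hdisj : Disjoint (A ∩ Set.Iic x) (A ∩ Set.Ioc x y) := by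
      apply Set.disjoint_left.mpr
      rintro z ⟨_, hz1⟩ ⟨_, hz2⟩
      exact absurd hz1 (not_le.mpr hz2.1)
    have hu := measure_union (μ := volume) hdisj (mA.inter measurableSet_Ioc)
    simp only [hF]
    rw [hsplit, hu, ENNReal.toReal_add (hfin _ inter_subset_left) (hfin _ inter_subset_left)]
    ring
  have hlip : ∀ x y : ℝ, x ≤ y → F y - F x ≤ y - x := by
    intro x y hxy
    rw [← hadd x y hxy]
    calc (volume (A ∩ Set.Ioc x y)).toReal
        ≤ (volume (Set.Ioc x y)).toReal :=
          ENNReal.toReal_mono (by simp [Real.volume_Ioc]) (measure_mono inter_subset_right)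
      _ = y - x := by rw [Real.volume_Ioc, ENNReal.toReal_ofReal (sub_nonneg.mpr hxy)]
  have hcont : Continuous F := by
    have hlw : LipschitzWith 1 F := by
      apply LipschitzWith.of_dist_le_mul
      intro x y
      rcases le_total x y with h | h
      · have h1 := hFmono h
        have h2 := hlip x y h
        rw [Real.dist_eq, Real.dist_eq, abs_of_nonpos (by linarith), abs_of_nonpos (by linarith)]
        simp only [NNReal.coe_one, one_mul]
        linarith
      · have h1 := hFmono h
        have h2 := hlip y x h
        rw [Real.dist_eq, Real.dist_eq, abs_of_nonneg (by linarith), abs_of_nonneg (by linarith)]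
        simp only [NNReal.coe_one, one_mul]
        linarith
    exact hlw.continuous
  have hFa : F a = 0 := by
    have hsub : A ∩ Set.Iic a ⊆ {a} := by
      rintro x ⟨hxA, hxa⟩
      exact le_antisymm hxa (hA hxA).1
    have h0 : volume (A ∩ Set.Iic a) = 0 :=
      measure_mono_null hsub (by simp)
    simp [hF, h0]
  have hFb : F b = M := by
    have : A ∩ Set.Iic b = A :=
      inter_eq_self_of_subset_left (fun x hx => (hA hx).2)
    simp [hF, this, hM]
  have hIVT : ∀ n : ℕ, n ≤ 2 * k → ∃ s, s ∈ Set.Icc a b ∧ F s = n * δ := by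
    intro n hn
    have hmem : (n:ℝ) * δ ∈ Set.Icc (F a) (F b) := by
      constructor
      · rw [hFa]; positivity
      · rw [hFb]
        have hn' : (n:ℝ) ≤ 2 * k := by exact_mod_cast (by push_cast; exact_mod_cast hn : (n:ℝ) ≤ ((2*k : ℕ) : ℝ))
        have : (n:ℝ) * δ ≤ 2 * k * δ := mul_le_mul_of_nonneg_right hn' hδpos.le
        have h2 : 2 * (k:ℝ) * δ = M := by
          rw [hδ]; field_simp
        linarith
    obtain ⟨s, hs, hFs⟩ := intermediate_value_Icc hab.le hcont.continuousOn hmem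
    exact ⟨s, hs, hFs⟩
  choose! g hg hFg using hIVT
  have hglt : ∀ m n : ℕ, m ≤ 2 * k → n ≤ 2 * k → m < n → g m < g n := by
    intro m n hm hn hmn
    by_contra h
    push_neg at h
    have h1 := hFmono h
    rw [hFg n hn, hFg m hm] at h1
    have h2 : (n:ℝ) ≤ m := le_of_mul_le_mul_right h1 hδpos
    exact absurd (by exact_mod_cast h2) (not_le.mpr hmn)
  have hne : ∀ i : Fin k, (A ∩ Set.Ioc (g (2 * (i:ℕ))) (g (2 * (i:ℕ) + 1))).Nonempty := by
    intro i
    have hik := i.isLt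
    have h1 : 2 * (i:ℕ) ≤ 2 * k := by omega
    have h2 : 2 * (i:ℕ) + 1 ≤ 2 * k := by omega
    have hle : g (2 * (i:ℕ)) ≤ g (2 * (i:ℕ) + 1) := (hglt _ _ h1 h2 (by omega)).le
    have hvol : (volume (A ∩ Set.Ioc (g (2 * (i:ℕ))) (g (2 * (i:ℕ) + 1)))).toReal = δ := by
      rw [hadd _ _ hle, hFg _ h2, hFg _ h1]
      push_cast
      ring
    apply nonempty_of_measure_ne_zero
    intro h0
    rw [h0] at hvol
    simp at hvol
    linarith
  choose v hv using hne
  refine ⟨v, fun i => (hv i).1, ?_⟩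
  intro i j hij
  have hik := i.isLt
  have hjk := j.isLt
  have hij' : (i:ℕ) < (j:ℕ) := hij
  have h1 : 2 * (i:ℕ) + 1 ≤ 2 * k := by omega
  have h2 : 2 * (j:ℕ) ≤ 2 * k := by omega
  have hlt : g (2 * (i:ℕ) + 1) < g (2 * (j:ℕ)) := hglt _ _ h1 h2 (by omega)
  have hgap : δ ≤ g (2 * (j:ℕ)) - g (2 * (i:ℕ) + 1) := by
    have hl := hlip _ _ hlt.le
    rw [hFg _ h2, hFg _ h1] at hl
    have hc : (1:ℝ) ≤ ((2 * (j:ℕ) : ℕ) : ℝ) - ((2 * (i:ℕ) + 1 : ℕ) : ℝ) := by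
      push_cast
      have : (i:ℝ) + 1 ≤ (j:ℝ) := by exact_mod_cast hij'
      linarith
    nlinarith [hδpos]
  have hvi : v i ≤ g (2 * (i:ℕ) + 1) := (hv i).2.2
  have hvj : g (2 * (j:ℕ)) < v j := (hv j).2.1
  linarith

/-- Remez-type inequality: for `0 < ρ < 1` there is a constant `c` depending only on
`k` and `ρ` such that for every compact interval `I = [a,b]`, every polynomial `Q` of
degree `< k` and every measurable `A ⊆ I` with `|A| ≥ ρ|I|`, one has
`sup_{t ∈ I} |Q(t)| ≤ c * sSup ((fun s => |Q.eval s|) '' A)`. -/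
theorem remez_type_inequality (k : ℕ) (hk : 0 < k) (ρ : ℝ) (hρ0 : 0 < ρ) (hρ1 : ρ < 1) :
    ∃ c : ℝ, 0 < c ∧
      ∀ a b : ℝ, a < b → ∀ Q : Polynomial ℝ, Q.natDegree < k →
        ∀ A : Set ℝ, A ⊆ Set.Icc a b → MeasurableSet A →
          ρ * (b - a) ≤ (volume A).toReal →
            ∀ t ∈ Set.Icc a b, |Q.eval t| ≤ c * sSup ((fun s => |Q.eval s|) '' A) := by
  have hkR : (0:ℝ) < k := by exact_mod_cast hk
  refine ⟨(k:ℝ) * (2 * k / ρ) ^ (k - 1), by positivity, ?_⟩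
  intro a b hab Q hQ A hA mA hvol t ht
  set M := (volume A).toReal with hM
  have hMpos : 0 < M := lt_of_lt_of_le (by nlinarith) hvol
  set δ := M / (2 * k) with hδ
  have hδpos : 0 < δ := by positivity
  obtain ⟨v, hvA, hsep⟩ := remez_sep_points k hk hab hA mA hMpos
  -- nodes separated
  have hsep' : ∀ i j : Fin k, i ≠ j → δ ≤ |v i - v j| := by
    intro i j hij
    rcases lt_or_gt_of_ne hij with h | h
    · have := hsep i j h
      rw [abs_sub_comm, abs_of_nonneg (by linarith)]
      linarith
    · have := hsep j i h
      rw [abs_of_nonneg (by linarith)]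
      linarith
  have hinj : Set.InjOn v ↑(Finset.univ : Finset (Fin k)) := by
    intro i _ j _ hvij
    by_contra hne
    have := hsep' i j hne
    rw [hvij, sub_self, abs_zero] at this
    linarith
  -- sup facts
  have hcontQ : Continuous fun s : ℝ => |Q.eval s| := (Polynomial.continuous Q).abs
  have hbdd : BddAbove ((fun s => |Q.eval s|) '' A) := by
    have h1 : BddAbove ((fun s => |Q.eval s|) '' Set.Icc a b) :=
      (isCompact_Icc.image_of_continuousOn hcontQ.continuousOn).bddAbove
    exact h1.mono (Set.image_mono hA)
  set S := sSup ((fun s => |Q.eval s|) '' A) with hS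
  have hSub : ∀ i : Fin k, |Q.eval (v i)| ≤ S := fun i =>
    le_csSup hbdd ⟨v i, hvA i, rfl⟩
  have hS0 : 0 ≤ S := le_trans (abs_nonneg _) (hSub ⟨0, hk⟩)
  -- numerator/denominator bounds
  have hnum : ∀ j : Fin k, |t - v j| ≤ b - a := by
    intro j
    have h1 := (hA (hvA j)).1
    have h2 := (hA (hvA j)).2
    rw [abs_sub_le_iff]
    constructor <;> [skip; skip] <;> linarith [ht.1, ht.2]
  have hratio : (b - a) / δ ≤ 2 * k / ρ := by
    rw [div_le_div_iff₀ hδpos hρ0]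
    have h2 : 2 * (k:ℝ) * δ = M := by rw [hδ]; field_simp
    nlinarith
  have hbasis : ∀ i : Fin k, |Polynomial.eval t (Lagrange.basis Finset.univ v i)| ≤ (2 * k / ρ) ^ (k - 1) := by
    intro i
    rw [Lagrange.basis, Polynomial.eval_prod, Finset.abs_prod]
    have hcard : (Finset.univ.erase i).card = k - 1 := by
      rw [Finset.card_erase_of_mem (Finset.mem_univ i), Finset.card_univ, Fintype.card_fin]
    calc (∏ j ∈ Finset.univ.erase i, |Polynomial.eval t (Lagrange.basisDivisor (v i) (v j))|)
        ≤ ∏ j ∈ Finset.univ.erase i, (2 * (k:ℝ) / ρ) := by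
          apply Finset.prod_le_prod (fun _ _ => abs_nonneg _)
          intro j hj
          have hji : j ≠ i := (Finset.mem_erase.mp hj).1
          rw [Lagrange.basisDivisor, Polynomial.eval_mul, Polynomial.eval_C,
            Polynomial.eval_sub, Polynomial.eval_X, Polynomial.eval_C, abs_mul, abs_inv,
            inv_mul_eq_div]
          calc |t - v j| / |v i - v j| ≤ (b - a) / δ :=
                div_le_div₀ (by linarith) (hnum j) hδpos (hsep' i j hji.symm)
            _ ≤ 2 * k / ρ := hratio
      _ = (2 * (k:ℝ) / ρ) ^ (k - 1) := by rw [Finset.prod_const, hcard]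
  -- interpolation
  have hdeg : Q.degree < ((Finset.univ : Finset (Fin k)).card : WithBot ℕ) := by
    rw [Finset.card_univ, Fintype.card_fin]
    exact lt_of_le_of_lt Polynomial.degree_le_natDegree (by exact_mod_cast hQ)
  have hQe := Lagrange.eq_interpolate hinj hdeg
  have hsum : Q.eval t = ∑ i : Fin k, Q.eval (v i) * Polynomial.eval t (Lagrange.basis Finset.univ v i) := by
    nth_rewrite 1 [hQe]
    rw [Lagrange.interpolate_apply, Polynomial.eval_finset_sum]
    simp [Polynomial.eval_mul]
  rw [hsum]
  calc |∑ i : Fin k, Q.eval (v i) * Polynomial.eval t (Lagrange.basis Finset.univ v i)|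
      ≤ ∑ i : Fin k, |Q.eval (v i) * Polynomial.eval t (Lagrange.basis Finset.univ v i)| :=
        Finset.abs_sum_le_sum_abs _ _
    _ ≤ ∑ _i : Fin k, S * (2 * (k:ℝ) / ρ) ^ (k - 1) := by
        apply Finset.sum_le_sum
        intro i _
        rw [abs_mul]
        exact mul_le_mul (hSub i) (hbasis i) (abs_nonneg _) hS0
    _ = (k:ℝ) * (2 * k / ρ) ^ (k - 1) * S := by
        rw [Finset.sum_const, Finset.card_univ, Fintype.card_fin, nsmul_eq_mul]
        ring
end

section
/- Let t > 0 and let Q be a polynomial of degree less than k on a compact interval I with positive length, such that sup_{x ∈ I} |Q(x)| ≥ t. Then there exists a constant c_k depending only on k such that the set {x ∈ I : |Q(x)| > t / c_k} has Lebesgue measure at least |I|/2. -/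
open MeasureTheory Set

set_option maxHeartbeats 2000000 in
/-- Level-set lemma: if a polynomial `Q` of degree `< k` satisfies `sup_{I} |Q| ≥ t` on a
compact interval `I` of positive length, then `|{x ∈ I : |Q(x)| > t/c_k}| ≥ |I|/2` for a
constant `c_k` depending only on `k`. -/
theorem polynomial_level_set (k : ℕ) (hk : 0 < k) :
    ∃ c : ℝ, 0 < c ∧
      ∀ a b : ℝ, a < b → ∀ Q : Polynomial ℝ, Q.natDegree < k →
        ∀ t : ℝ, 0 < t → t ≤ sSup ((fun s => |Q.eval s|) '' Set.Icc a b) →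
          ENNReal.ofReal ((b - a) / 2) ≤ volume {x ∈ Set.Icc a b | t / c < |Q.eval x|} := by
  have hk' : (0:ℝ) < k := by exact_mod_cast hk
  refine ⟨(2*(k:ℝ))^k, by positivity, ?_⟩
  intro a b hab Q hQdeg t ht hts
  set c : ℝ := (2*(k:ℝ))^k with hc
  have hc0 : (0:ℝ) < c := by positivity
  by_contra hcon
  push_neg at hcon
  set S : Set ℝ := {x ∈ Set.Icc a b | t / c < |Q.eval x|} with hS
  set E : Set ℝ := {x ∈ Set.Icc a b | |Q.eval x| ≤ t / c} with hE
  have hcontQ : Continuous fun x : ℝ => |Q.eval x| := (Polynomial.continuous Q).abs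
  have hEclosed : IsClosed E := by
    have : E = Set.Icc a b ∩ (fun x : ℝ => |Q.eval x|) ⁻¹' (Set.Iic (t/c)) := by
      ext x; simp [hE, Set.mem_sep_iff, and_comm]
    rw [this]
    exact isClosed_Icc.inter (isClosed_Iic.preimage hcontQ)
  have hEmeas : MeasurableSet E := hEclosed.measurableSet
  have hdisj : Disjoint S E := by
    rw [Set.disjoint_left]
    rintro x ⟨_, hx2⟩ ⟨_, hx4⟩
    linarith
  have hUnion : S ∪ E = Set.Icc a b := by
    ext x
    constructor
    · rintro (⟨h, _⟩ | ⟨h, _⟩) <;> exact h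
    · intro h
      rcases lt_or_ge (t/c) (|Q.eval x|) with h2 | h2
      · exact Or.inl ⟨h, h2⟩
      · exact Or.inr ⟨h, h2⟩
  have hsum : volume S + volume E = ENNReal.ofReal (b - a) := by
    rw [← measure_union hdisj hEmeas, hUnion, Real.volume_Icc]
  have hSfin : volume S ≠ ⊤ := ne_top_of_lt hcon
  have hEfin : volume E ≠ ⊤ := by
    refine ne_top_of_le_ne_top (b := ENNReal.ofReal (b - a)) (by simp) ?_
    rw [← Real.volume_Icc]
    exact measure_mono (fun x hx => hx.1)
  set sE : ℝ := (volume E).toReal with hsEdef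
  have hsE : (b - a)/2 < sE := by
    have h1 : (volume S).toReal + sE = b - a := by
      rw [← ENNReal.toReal_add hSfin hEfin, hsum, ENNReal.toReal_ofReal (by linarith)]
    have h2 : (volume S).toReal < (b - a)/2 := ENNReal.toReal_lt_of_lt_ofReal hcon
    linarith
  have hsE0 : 0 < sE := by linarith
  -- the cumulative measure function
  set g : ℝ → ℝ := fun y => (volume (E ∩ Set.Iic y)).toReal with hgdef
  have hfin : ∀ y, volume (E ∩ Set.Iic y) ≠ ⊤ := fun y =>
    ne_top_of_le_ne_top hEfin (measure_mono Set.inter_subset_left)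
  have hgmono : Monotone g := fun y z hyz => ENNReal.toReal_mono (hfin z)
    (measure_mono (Set.inter_subset_inter_right _ (Set.Iic_subset_Iic.mpr hyz)))
  have hsub : ∀ y z : ℝ, y ≤ z → g z ≤ g y + (z - y) := by
    intro y z hyz
    have hsubset : E ∩ Set.Iic z ⊆ (E ∩ Set.Iic y) ∪ Set.Ioc y z := by
      rintro x ⟨hxE, hxz⟩
      rcases le_or_gt x y with h | h
      · exact Or.inl ⟨hxE, h⟩
      · exact Or.inr ⟨h, hxz⟩
    have h1 : volume (E ∩ Set.Iic z) ≤ volume (E ∩ Set.Iic y) + volume (Set.Ioc y z) :=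
      (measure_mono hsubset).trans (measure_union_le _ _)
    have h2 : (volume (E ∩ Set.Iic y) + volume (Set.Ioc y z)).toReal = g y + (z - y) := by
      rw [ENNReal.toReal_add (hfin _) (by simp [Real.volume_Ioc]), Real.volume_Ioc,
        ENNReal.toReal_ofReal (by linarith)]
    calc g z ≤ (volume (E ∩ Set.Iic y) + volume (Set.Ioc y z)).toReal :=
          ENNReal.toReal_mono (ENNReal.add_ne_top.mpr ⟨hfin _, by simp [Real.volume_Ioc]⟩) h1
      _ = g y + (z - y) := h2
  have hgcont : Continuous g := by
    have hlip : LipschitzWith 1 g := by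
      apply LipschitzWith.of_dist_le_mul
      intro y z
      rw [NNReal.coe_one, one_mul, Real.dist_eq, Real.dist_eq]
      rcases le_total y z with h | h
      · have h1 := hsub y z h
        have h2 := hgmono h
        rw [abs_of_nonpos (by linarith : g y - g z ≤ 0), abs_of_nonpos (by linarith : y - z ≤ 0)]
        linarith
      · have h1 := hsub z y h
        have h2 := hgmono h
        rw [abs_of_nonneg (by linarith : 0 ≤ g y - g z), abs_of_nonneg (by linarith : 0 ≤ y - z)]
        linarith
    exact hlip.continuous
  have hga : ∀ y, y < a → g y = 0 := by
    intro y hy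
    have : E ∩ Set.Iic y = ∅ := by
      ext x
      simp only [Set.mem_inter_iff, Set.mem_empty_iff_false, iff_false, not_and, hE,
        Set.mem_sep_iff, Set.mem_Iic]
      rintro ⟨⟨hx1, _⟩, _⟩
      linarith
    simp [hgdef, this]
  have hgb : g b = sE := by
    have : E ∩ Set.Iic b = E := by
      apply Set.inter_eq_self_of_subset_left
      intro x hx
      exact hx.1.2
    simp [hgdef, this, hsEdef]
  -- quantile points
  set τ : ℕ → ℝ := fun j => sE * (2*(j:ℝ)+1) / (2*(k:ℝ)) with hτdef
  have hτpos : ∀ j : ℕ, 0 < τ j := by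
    intro j
    have : (0:ℝ) ≤ (j:ℝ) := Nat.cast_nonneg j
    apply div_pos (by nlinarith) (by positivity)
  have hτle : ∀ j : ℕ, j < k → τ j ≤ sE := by
    intro j hj
    have hjk : (j:ℝ) + 1 ≤ (k:ℝ) := by exact_mod_cast hj
    rw [hτdef, div_le_iff₀ (by positivity)]
    nlinarith
  have hτlt : ∀ i j : ℕ, i < j → τ i < τ j := by
    intro i j hij
    have hji : (1:ℝ) ≤ (j:ℝ) - (i:ℝ) := by
      have : (i:ℝ) + 1 ≤ (j:ℝ) := by exact_mod_cast hij
      linarith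
    rw [hτdef, div_lt_div_iff₀ (by positivity) (by positivity)]
    nlinarith [mul_le_mul_of_nonneg_left hji (le_of_lt (mul_pos hsE0 hk'))]
  set X : ℕ → ℝ := fun j => sInf {y | τ j ≤ g y} with hXdef
  have hbdd : ∀ j : ℕ, BddBelow {y | τ j ≤ g y} := by
    intro j
    refine ⟨a, fun y hy => ?_⟩
    by_contra h
    push_neg at h
    have h0 := hga y h
    have := hτpos j
    simp only [Set.mem_setOf_eq, h0] at hy
    linarith
  have hne : ∀ j : ℕ, j < k → Set.Nonempty {y | τ j ≤ g y} := by
    intro j hj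
    exact ⟨b, by simp only [Set.mem_setOf_eq, hgb]; exact hτle j hj⟩
  have hsetclosed : ∀ j : ℕ, IsClosed {y | τ j ≤ g y} :=
    fun j => isClosed_le continuous_const hgcont
  have hXmem : ∀ j : ℕ, j < k → τ j ≤ g (X j) :=
    fun j hj => (hsetclosed j).csInf_mem (hne j hj) (hbdd j)
  have hXltnot : ∀ j : ℕ, ∀ y, y < X j → g y < τ j := by
    intro j y hy
    by_contra h
    push_neg at h
    exact absurd (csInf_le (hbdd j) h) (not_le.mpr hy)
  have hgXle : ∀ j : ℕ, g (X j) ≤ τ j := by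
    intro j
    have htd : Filter.Tendsto g (nhdsWithin (X j) (Set.Iio (X j))) (nhds (g (X j))) :=
      (hgcont.tendsto (X j)).mono_left nhdsWithin_le_nhds
    refine le_of_tendsto htd ?_
    filter_upwards [self_mem_nhdsWithin] with y hy
    exact (hXltnot j y hy).le
  have hXE : ∀ j : ℕ, j < k → X j ∈ E := by
    intro j hj
    have hcl : X j ∈ closure E := by
      rw [Metric.mem_closure_iff]
      intro ε hε
      have h1 : g (X j - ε) < τ j := hXltnot j _ (by linarith)
      have h2 : volume (E ∩ Set.Ioc (X j - ε) (X j)) ≠ 0 := by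
        intro h0
        have hsubset : E ∩ Set.Iic (X j) ⊆
            (E ∩ Set.Iic (X j - ε)) ∪ (E ∩ Set.Ioc (X j - ε) (X j)) := by
          rintro x ⟨hxE, hxz⟩
          rcases le_or_gt x (X j - ε) with h | h
          · exact Or.inl ⟨hxE, h⟩
          · exact Or.inr ⟨hxE, h, hxz⟩
        have hle : volume (E ∩ Set.Iic (X j)) ≤ volume (E ∩ Set.Iic (X j - ε)) := by
          calc volume (E ∩ Set.Iic (X j))
              ≤ volume (E ∩ Set.Iic (X j - ε)) + volume (E ∩ Set.Ioc (X j - ε) (X j)) :=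
                (measure_mono hsubset).trans (measure_union_le _ _)
            _ = volume (E ∩ Set.Iic (X j - ε)) := by rw [h0, add_zero]
        have hgle : g (X j) ≤ g (X j - ε) := ENNReal.toReal_mono (hfin _) hle
        have := hXmem j hj
        linarith
      obtain ⟨z, hzE, hz1, hz2⟩ := nonempty_of_measure_ne_zero h2
      refine ⟨z, hzE, ?_⟩
      rw [Real.dist_eq, abs_of_nonneg (by linarith)]
      linarith
    rwa [hEclosed.closure_eq] at hcl
  have hXI : ∀ j : ℕ, j < k → X j ∈ Set.Icc a b := fun j hj => (hXE j hj).1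
  have hXorder : ∀ i j : ℕ, i < j → j < k → sE / k ≤ X j - X i := by
    intro i j hij hjk
    have hik : i < k := lt_trans hij hjk
    have hgi : g (X i) ≤ τ i := hgXle i
    have hgj : τ j ≤ g (X j) := hXmem j hjk
    have hle : X i ≤ X j := by
      by_contra h
      push_neg at h
      have h1 := hgmono h.le
      have h2 := hτlt i j hij
      linarith
    have h3 := hsub (X i) (X j) hle
    have hτd : sE / k ≤ τ j - τ i := by
      have hji : (i:ℝ) + 1 ≤ (j:ℝ) := by exact_mod_cast hij
      have heq : τ j - τ i = sE * ((j:ℝ) - (i:ℝ)) / k := by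
        rw [hτdef]
        field_simp
        ring
      have hji' : (1:ℝ) ≤ (j:ℝ) - (i:ℝ) := by linarith
      rw [heq, div_le_div_iff₀ hk' hk']
      nlinarith [mul_le_mul_of_nonneg_left hji' (le_of_lt (mul_pos hsE0 hk'))]
    linarith
  have hsep : ∀ i j : ℕ, i < k → j < k → i ≠ j → (b - a)/(2*(k:ℝ)) ≤ |X i - X j| := by
    intro i j hi hj hij
    have hL : (b - a)/(2*(k:ℝ)) ≤ sE / k := by
      rw [div_le_div_iff₀ (by positivity) hk']
      nlinarith
    have hd : 0 < sE / (k:ℝ) := div_pos hsE0 hk'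
    rcases hij.lt_or_gt with h | h
    · have := hXorder i j h hj
      rw [abs_sub_comm, abs_of_nonneg (by linarith)]
      linarith
    · have := hXorder j i h hi
      rw [abs_of_nonneg (by linarith)]
      linarith
  have hXinj : Set.InjOn X ↑(Finset.range k) := by
    intro i hi j hj hXij
    by_contra hij
    have h1 := hsep i j (by simpa using hi) (by simpa using hj) hij
    rw [hXij, sub_self, abs_zero] at h1
    have : (0:ℝ) < (b - a)/(2*(k:ℝ)) := div_pos (by linarith) (by positivity)
    linarith
  have hdeg : Q.degree < (Finset.range k).card := by
    rw [Finset.card_range]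
    exact lt_of_le_of_lt Polynomial.degree_le_natDegree (by exact_mod_cast hQdeg)
  have hQeq := Lagrange.eq_interpolate hXinj hdeg
  -- pointwise bound on Icc a b
  have hbound : ∀ y ∈ Set.Icc a b, |Q.eval y| ≤ t / 2 := by
    intro y hy
    have hbasis : ∀ i ∈ Finset.range k,
        |(Lagrange.basis (Finset.range k) X i).eval y| ≤ (2*(k:ℝ))^(k-1) := by
      intro i hi
      have hik : i < k := Finset.mem_range.mp hi
      rw [Lagrange.basis, Polynomial.eval_prod, Finset.abs_prod]
      calc ∏ j ∈ (Finset.range k).erase i, |(Lagrange.basisDivisor (X i) (X j)).eval y|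
          ≤ ∏ _j ∈ (Finset.range k).erase i, (2*(k:ℝ)) := by
            apply Finset.prod_le_prod (fun _ _ => abs_nonneg _)
            intro j hj
            obtain ⟨hji, hjr⟩ := Finset.mem_erase.mp hj
            have hjk : j < k := Finset.mem_range.mp hjr
            have hXj := hXI j hjk
            have hXi := hXI i hik
            have hnum : |y - X j| ≤ b - a := by
              rw [abs_sub_le_iff]
              constructor
              · linarith [hy.2, hXj.1]
              · linarith [hy.1, hXj.2]
            have hden : (b - a)/(2*(k:ℝ)) ≤ |X i - X j| := hsep i j hik hjk (Ne.symm hji)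
            have heval : (Lagrange.basisDivisor (X i) (X j)).eval y
                = (X i - X j)⁻¹ * (y - X j) := by
              simp [Lagrange.basisDivisor]
            rw [heval, abs_mul, abs_inv]
            have hd0 : (0:ℝ) < (b - a)/(2*(k:ℝ)) := div_pos (by linarith) (by positivity)
            rw [inv_mul_le_iff₀ (lt_of_lt_of_le hd0 hden)]
            have hmul : 2*(k:ℝ) * ((b - a)/(2*(k:ℝ))) = b - a := by field_simp
            have h5 : b - a ≤ 2*(k:ℝ) * |X i - X j| := by
              calc b - a = 2*(k:ℝ) * ((b - a)/(2*(k:ℝ))) := hmul.symm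
                _ ≤ 2*(k:ℝ) * |X i - X j| :=
                    mul_le_mul_of_nonneg_left hden (by positivity)
            linarith
        _ = (2*(k:ℝ))^(k-1) := by
            rw [Finset.prod_const, Finset.card_erase_of_mem hi, Finset.card_range]
    conv_lhs => rw [hQeq]
    rw [Lagrange.interpolate_apply, Polynomial.eval_finset_sum]
    calc |∑ i ∈ Finset.range k,
          (Polynomial.C (Q.eval (X i)) * Lagrange.basis (Finset.range k) X i).eval y|
        ≤ ∑ i ∈ Finset.range k,
          |(Polynomial.C (Q.eval (X i)) * Lagrange.basis (Finset.range k) X i).eval y| :=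
          Finset.abs_sum_le_sum_abs _ _
      _ ≤ ∑ _i ∈ Finset.range k, (t/c * (2*(k:ℝ))^(k-1)) := by
          apply Finset.sum_le_sum
          intro i hi
          rw [Polynomial.eval_mul, Polynomial.eval_C, abs_mul]
          have h1 : |Q.eval (X i)| ≤ t / c := (hXE i (Finset.mem_range.mp hi)).2
          exact mul_le_mul h1 (hbasis i hi) (abs_nonneg _)
            (le_of_lt (div_pos ht hc0))
      _ = t / 2 := by
          rw [Finset.sum_const, Finset.card_range, nsmul_eq_mul]
          have hck : c = (2*(k:ℝ))^(k-1) * (2*(k:ℝ)) := by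
            rw [hc, ← pow_succ, Nat.sub_add_cancel hk]
          rw [hck]
          have h2k0 : (2*(k:ℝ)) ≠ 0 := by positivity
          have hP0 : ((2*(k:ℝ))^(k-1)) ≠ 0 := pow_ne_zero _ h2k0
          field_simp
  have hle : sSup ((fun s => |Q.eval s|) '' Set.Icc a b) ≤ t / 2 := by
    apply Real.sSup_le
    · rintro x ⟨y, hy, rfl⟩
      exact hbound y hy
    · linarith
  linarith [hts.trans hle]
end

section
/- Let N be a positive integer, let I_j := [0, j/N] × [0, 1/j] ⊂ ℝ² for j = 1,…,N, let 0 < c ≤ 1, and let A_j ⊆ I_j be measurable with |A_j| ≥ c|I_j| for each j. Then there exists a constant c₁ > 0, depending only on c (not on N), such that |⋃_{j=1}^N A_j| ≥ c₁ |⋃_{j=1}^N I_j|. -/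
open MeasureTheory Set

/-- The rectangle `I_j = [0, j/N] × [0, 1/j]` in the plane. -/
def saksRect (N j : ℕ) : Set (ℝ × ℝ) :=
  Set.Icc (0 : ℝ) (j / N) ×ˢ Set.Icc (0 : ℝ) (1 / j)

lemma vol_rect (a b : ℝ) :
    volume (Icc (0:ℝ) a ×ˢ Icc (0:ℝ) b) = ENNReal.ofReal a * ENNReal.ofReal b := by
  rw [Measure.volume_eq_prod, Measure.prod_prod, Real.volume_Icc, Real.volume_Icc,
    sub_zero, sub_zero]

lemma meas_saksRect (N j : ℕ) : MeasurableSet (saksRect N j) :=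
  measurableSet_Icc.prod measurableSet_Icc

lemma vol_saksRect (N j : ℕ) (hN : 0 < N) (hj : 1 ≤ j) :
    volume (saksRect N j) = ENNReal.ofReal (1 / N) := by
  have hjr : (0:ℝ) < j := by exact_mod_cast hj
  have hNr : (0:ℝ) < N := by exact_mod_cast hN
  rw [saksRect, vol_rect, ← ENNReal.ofReal_mul (by positivity)]
  congr 1
  field_simp

/-- If `A_j ⊆ I_j` with `|A_j| ≥ c|I_j|`, then `|⋃ A_j| ≥ c₁ |⋃ I_j|` for a constant
`c₁ > 0` depending only on `c` (and not on `N`). -/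
theorem saks_union_lower_bound (c : ℝ) (hc0 : 0 < c) (hc1 : c ≤ 1) :
    ∃ c₁ : ℝ, 0 < c₁ ∧
      ∀ N : ℕ, 0 < N → ∀ A : ℕ → Set (ℝ × ℝ), (∀ j, MeasurableSet (A j)) →
        (∀ j, 1 ≤ j → j ≤ N → A j ⊆ saksRect N j) →
        (∀ j, 1 ≤ j → j ≤ N →
          c * (volume (saksRect N j)).toReal ≤ (volume (A j)).toReal) →
        c₁ * (volume (⋃ j ∈ Finset.Icc 1 N, saksRect N j)).toReal ≤
          (volume (⋃ j ∈ Finset.Icc 1 N, A j)).toReal := by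
  set M : ℕ := ⌈2/c⌉₊ + 2 with hMdef
  have hM2 : 2 ≤ M := by omega
  have hM1 : 1 < M := by omega
  have hMr1 : (1:ℝ) < M := by exact_mod_cast hM1
  have hMr0 : (0:ℝ) < M := by linarith
  have hMc : 1 / ((M:ℝ) - 1) ≤ c / 2 := by
    have h1 : (2:ℝ)/c ≤ (⌈2/c⌉₊ : ℝ) := Nat.le_ceil _
    have h2 : (2:ℝ) ≤ c * ⌈2/c⌉₊ := by
      rw [div_le_iff₀ hc0] at h1; linarith
    have h3 : (M:ℝ) - 1 = (⌈2/c⌉₊ : ℝ) + 1 := by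
      rw [hMdef]; push_cast; ring
    rw [div_le_div_iff₀ (by rw [h3]; positivity) two_pos, h3]
    nlinarith
  clear_value M
  refine ⟨c / (2 * M), by positivity, ?_⟩
  intro N hN A hAm hsub hvol
  have hNr : (0:ℝ) < N := by exact_mod_cast hN
  set K := Nat.log M N with hKdef
  have hMK : M ^ K ≤ N := Nat.pow_log_le_self M (by omega)
  clear_value K
  have hpow : ∀ k, k ≤ K → 1 ≤ M ^ k ∧ M ^ k ≤ N := by
    intro k hk
    exact ⟨Nat.one_le_pow _ _ (by omega),
      le_trans (Nat.pow_le_pow_right (by omega) hk) hMK⟩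
  -- upper bound for the union of rectangles
  have cover : (⋃ j ∈ Finset.Icc 1 N, saksRect N j) ⊆
      ⋃ k ∈ Finset.range (K+1), Icc (0:ℝ) ((M:ℝ)^(k+1)/N) ×ˢ Icc (0:ℝ) (1/(M:ℝ)^k) := by
    intro x hx
    simp only [mem_iUnion, Finset.mem_Icc, Finset.mem_range, exists_prop] at hx ⊢
    obtain ⟨j, ⟨hj1, hjN⟩, hxj⟩ := hx
    refine ⟨Nat.log M j, by have := Nat.log_mono_right (b := M) hjN; omega, ?_⟩
    have hjr : (0:ℝ) < j := by exact_mod_cast hj1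
    have h1 : (j:ℝ)/N ≤ (M:ℝ)^(Nat.log M j + 1)/N := by
      have := Nat.lt_pow_succ_log_self hM1 j
      have : (j:ℝ) ≤ (M:ℝ)^(Nat.log M j + 1) := by exact_mod_cast this.le
      gcongr
    have h2 : (1:ℝ)/j ≤ 1/(M:ℝ)^(Nat.log M j) := by
      have hlog := Nat.pow_log_le_self M (show j ≠ 0 by omega)
      have hc : ((M:ℝ))^(Nat.log M j) ≤ (j:ℝ) := by exact_mod_cast hlog
      gcongr
    exact Set.prod_mono (Icc_subset_Icc le_rfl h1) (Icc_subset_Icc le_rfl h2) hxj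
  have hUI : volume (⋃ j ∈ Finset.Icc 1 N, saksRect N j) ≤
      (K+1 : ℕ) * ENNReal.ofReal ((M:ℝ)/N) := by
    refine le_trans (measure_mono cover) ?_
    refine le_trans (measure_biUnion_finset_le _ _) ?_
    have hvk : ∀ k ∈ Finset.range (K+1),
        volume (Icc (0:ℝ) ((M:ℝ)^(k+1)/N) ×ˢ Icc (0:ℝ) (1/(M:ℝ)^k)) =
        ENNReal.ofReal ((M:ℝ)/N) := by
      intro k _
      rw [vol_rect, ← ENNReal.ofReal_mul (by positivity)]
      congr 1
      rw [pow_succ]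
      field_simp
    rw [Finset.sum_congr rfl hvk, Finset.sum_const, Finset.card_range, nsmul_eq_mul]
  -- the disjoint pieces
  set E : ℕ → Set (ℝ × ℝ) :=
    fun k => A (M^k) \ ⋃ l ∈ Finset.range k, saksRect N (M^l) with hEdef
  have hEm : ∀ k, MeasurableSet (E k) := fun k =>
    (hAm _).diff (Finset.measurableSet_biUnion _ fun l _ => meas_saksRect N (M^l))
  have hEsub : ∀ k, k ≤ K → E k ⊆ saksRect N (M^k) := by
    intro k hk
    exact (diff_subset).trans (hsub _ (hpow k hk).1 (hpow k hk).2)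
  have hEA : ∀ k, E k ⊆ A (M^k) := fun k => diff_subset
  have key : ∀ a b : ℕ, a ≤ K → a < b → Disjoint (E a) (E b) := by
    intro a b ha hab
    refine Set.disjoint_left.2 fun x hxa hxb => ?_
    exact hxb.2 (Set.mem_biUnion (Finset.mem_range.2 hab) (hEsub a ha hxa))
  have hdisj : (↑(Finset.range (K+1)) : Set ℕ).PairwiseDisjoint E := by
    intro k hk k' hk' hne
    simp only [Finset.coe_range, mem_Iio] at hk hk'
    rcases hne.lt_or_gt with h | h
    · exact key k k' (by omega) h
    · exact (key k' k (by omega) h).symm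
  -- lower bound for each piece
  have hEvol : ∀ k, k ≤ K → ENNReal.ofReal (c/(2*N)) ≤ volume (E k) := by
    intro k hk
    obtain ⟨hk1, hkN⟩ := hpow k hk
    -- measure of A (M^k) from below
    have hvolA : ENNReal.ofReal (c/N) ≤ volume (A (M^k)) := by
      have h := hvol (M^k) hk1 hkN
      rw [vol_saksRect N _ hN hk1, ENNReal.toReal_ofReal (by positivity)] at h
      have hfin : volume (A (M^k)) ≠ ⊤ :=
        ne_top_of_le_ne_top (by rw [vol_saksRect N _ hN hk1]; exact ENNReal.ofReal_ne_top)
          (measure_mono (hsub _ hk1 hkN))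
      calc ENNReal.ofReal (c/N) ≤ ENNReal.ofReal ((volume (A (M^k))).toReal) := by
            apply ENNReal.ofReal_le_ofReal; rw [div_eq_mul_one_div]; exact h
        _ = volume (A (M^k)) := ENNReal.ofReal_toReal hfin
    -- A (M^k) is covered by E k and the overlaps
    have hcov : A (M^k) ⊆ E k ∪ ⋃ l ∈ Finset.range k,
        (Icc (0:ℝ) ((M:ℝ)^l/N) ×ˢ Icc (0:ℝ) (1/(M:ℝ)^k)) := by
      intro x hx
      by_cases hxE : x ∈ E k
      · exact Or.inl hxE
      · right
        have : x ∈ ⋃ l ∈ Finset.range k, saksRect N (M^l) := by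
          by_contra h; exact hxE ⟨hx, h⟩
        simp only [mem_iUnion, exists_prop] at this ⊢
        obtain ⟨l, hl, hxl⟩ := this
        refine ⟨l, hl, ?_, ?_⟩
        · have := hxl.1
          simpa [saksRect] using this
        · have := (hsub _ hk1 hkN hx).2
          have h2 : x.2 ∈ Icc (0:ℝ) (1/((M:ℝ)^k)) := by
            have hcast : ((M^k : ℕ):ℝ) = (M:ℝ)^k := by push_cast; ring
            simpa [saksRect, hcast] using this
          exact h2
    have hover : volume (A (M^k)) ≤ volume (E k) + ENNReal.ofReal (c/(2*N)) := by
      refine le_trans (measure_mono hcov) ?_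
      refine le_trans (measure_union_le _ _) ?_
      gcongr
      refine le_trans (measure_biUnion_finset_le _ _) ?_
      have hvl : ∀ l ∈ Finset.range k,
          volume (Icc (0:ℝ) ((M:ℝ)^l/N) ×ˢ Icc (0:ℝ) (1/(M:ℝ)^k)) =
          ENNReal.ofReal ((M:ℝ)^l/((M:ℝ)^k * N)) := by
        intro l _
        rw [vol_rect, ← ENNReal.ofReal_mul (by positivity)]
        congr 1
        field_simp
      rw [Finset.sum_congr rfl hvl, ← ENNReal.ofReal_sum_of_nonneg
        (fun l _ => by positivity)]
      apply ENNReal.ofReal_le_ofReal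
      have hsum : ∑ l ∈ Finset.range k, (M:ℝ)^l/((M:ℝ)^k * N)
          = (∑ l ∈ Finset.range k, (M:ℝ)^l) / ((M:ℝ)^k * N) := by
        rw [Finset.sum_div]
      rw [hsum, geom_sum_eq (by linarith) k]
      have hMk : (0:ℝ) < (M:ℝ)^k := by positivity
      have h1 : ((M:ℝ)^k - 1)/((M:ℝ) - 1) ≤ (M:ℝ)^k / ((M:ℝ)-1) := by
        gcongr
        · linarith
      calc ((M:ℝ)^k - 1)/((M:ℝ) - 1) / ((M:ℝ)^k * N)
          ≤ ((M:ℝ)^k / ((M:ℝ)-1)) / ((M:ℝ)^k * N) := by gcongr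
        _ = (1/((M:ℝ)-1)) / N := by
              have hM1' : (M:ℝ) - 1 ≠ 0 := by linarith
              have hN' : (N:ℝ) ≠ 0 := ne_of_gt hNr
              have hMk' : (M:ℝ)^k ≠ 0 := ne_of_gt hMk
              field_simp
        _ ≤ (c/2) / N := by gcongr
        _ = c/(2*N) := by ring
    -- conclude
    have hsplit : ENNReal.ofReal (c/N) =
        ENNReal.ofReal (c/(2*N)) + ENNReal.ofReal (c/(2*N)) := by
      rw [← ENNReal.ofReal_add (by positivity) (by positivity)]
      congr 1
      field_simp
      ring
    have := le_trans hvolA hover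
    rw [hsplit] at this
    exact (ENNReal.add_le_add_iff_right ENNReal.ofReal_ne_top).1
      (by rwa [add_comm (volume (E k))] at this)
  -- lower bound for the union of the A's
  have hUA : (K+1 : ℕ) * ENNReal.ofReal (c/(2*N)) ≤
      volume (⋃ j ∈ Finset.Icc 1 N, A j) := by
    have hsubU : (⋃ k ∈ Finset.range (K+1), E k) ⊆ ⋃ j ∈ Finset.Icc 1 N, A j := by
      intro x hx
      simp only [mem_iUnion, Finset.mem_range, Finset.mem_Icc, exists_prop] at hx ⊢
      obtain ⟨k, hkK, hxk⟩ := hx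
      exact ⟨M^k, ⟨(hpow k (by omega)).1, (hpow k (by omega)).2⟩, hEA k hxk⟩
    refine le_trans ?_ (measure_mono hsubU)
    rw [measure_biUnion_finset hdisj (fun k _ => hEm k)]
    calc (K+1 : ℕ) * ENNReal.ofReal (c/(2*N))
        = ∑ _k ∈ Finset.range (K+1), ENNReal.ofReal (c/(2*N)) := by
          rw [Finset.sum_const, Finset.card_range, nsmul_eq_mul]
      _ ≤ ∑ k ∈ Finset.range (K+1), volume (E k) :=
          Finset.sum_le_sum fun k hkk => hEvol k (by
            simp only [Finset.mem_range] at hkk; omega)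
  -- finiteness
  have hfinI : volume (⋃ j ∈ Finset.Icc 1 N, saksRect N j) ≠ ⊤ :=
    ne_top_of_le_ne_top
      (ENNReal.mul_ne_top (ENNReal.natCast_ne_top _) ENNReal.ofReal_ne_top) hUI
  have hsubIA : (⋃ j ∈ Finset.Icc 1 N, A j) ⊆ ⋃ j ∈ Finset.Icc 1 N, saksRect N j := by
    refine Set.iUnion₂_mono fun j hj => ?_
    simp only [Finset.mem_Icc] at hj
    exact hsub j hj.1 hj.2
  have hfinA : volume (⋃ j ∈ Finset.Icc 1 N, A j) ≠ ⊤ :=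
    ne_top_of_le_ne_top hfinI (measure_mono hsubIA)
  -- pass to reals
  have tUI : (volume (⋃ j ∈ Finset.Icc 1 N, saksRect N j)).toReal ≤ (K+1) * ((M:ℝ)/N) := by
    have := ENNReal.toReal_mono
      (ENNReal.mul_ne_top (ENNReal.natCast_ne_top _) ENNReal.ofReal_ne_top) hUI
    rw [ENNReal.toReal_mul, ENNReal.toReal_natCast,
      ENNReal.toReal_ofReal (by positivity)] at this
    push_cast at this ⊢
    linarith
  have tUA : (K+1) * (c/(2*N)) ≤ (volume (⋃ j ∈ Finset.Icc 1 N, A j)).toReal := by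
    have := ENNReal.toReal_mono hfinA hUA
    rw [ENNReal.toReal_mul, ENNReal.toReal_natCast,
      ENNReal.toReal_ofReal (by positivity)] at this
    push_cast at this ⊢
    linarith
  have hKr : (0:ℝ) ≤ (K:ℝ) + 1 := by positivity
  calc c / (2*M) * (volume (⋃ j ∈ Finset.Icc 1 N, saksRect N j)).toReal
      ≤ c / (2*M) * ((K+1) * ((M:ℝ)/N)) := by
        apply mul_le_mul_of_nonneg_left _ (by positivity)
        push_cast at tUI ⊢
        exact tUI
    _ = (K+1) * (c/(2*N)) := by field_simp
    _ ≤ (volume (⋃ j ∈ Finset.Icc 1 N, A j)).toReal := tUA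
end

section
/- Let I = I₁ × I₂ be a rectangle in the plane with positive area, let k₁, k₂ be positive integers, and let P_I denote the orthogonal projection in L²(I) onto the space of bivariate polynomials of degree less than k₁ in the first variable and less than k₂ in the second. Suppose φ ∈ L²(I) satisfies (1/|I|) ∫_I φ ≥ c_{k₁} c_{k₂} t for some t > 0, where c_{k₁}, c_{k₂} are the constants from the one-dimensional level-set lemma for polynomials. Then there exists a measurable set A ⊆ I with |A| ≥ |I|/4 such that |P_I φ(x)| ≥ t for all x ∈ A. -/
open MeasureTheory Set

/-- `p` is (the restriction of) a bivariate polynomial of degree `< k₁` in the first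
variable and `< k₂` in the second. -/
def IsBivarPolyLt (k₁ k₂ : ℕ) (p : ℝ × ℝ → ℝ) : Prop :=
  ∃ Q : MvPolynomial (Fin 2) ℝ, Q.degreeOf 0 < k₁ ∧ Q.degreeOf 1 < k₂ ∧
    ∀ x y : ℝ, p (x, y) = MvPolynomial.eval ![x, y] Q

/-- Specialization of a bivariate polynomial in the second variable. -/
noncomputable def specY (Q : MvPolynomial (Fin 2) ℝ) (y : ℝ) : Polynomial ℝ :=
  MvPolynomial.aeval ![Polynomial.X, Polynomial.C y] Q

/-- Specialization of a bivariate polynomial in the first variable. -/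
noncomputable def specX (Q : MvPolynomial (Fin 2) ℝ) (x : ℝ) : Polynomial ℝ :=
  MvPolynomial.aeval ![Polynomial.C x, Polynomial.X] Q

lemma specY_eval (Q : MvPolynomial (Fin 2) ℝ) (y x : ℝ) :
    (specY Q y).eval x = MvPolynomial.eval ![x, y] Q := by
  induction Q using MvPolynomial.induction_on with
  | C a => simp [specY]
  | add p q hp hq => simp only [specY, map_add, Polynomial.eval_add] at *; rw [hp, hq]
  | mul_X p i h =>
      fin_cases i <;>
        simp only [specY, map_mul, Polynomial.eval_mul, MvPolynomial.aeval_X] at * <;>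
        simp [h]

lemma specX_eval (Q : MvPolynomial (Fin 2) ℝ) (x y : ℝ) :
    (specX Q x).eval y = MvPolynomial.eval ![x, y] Q := by
  induction Q using MvPolynomial.induction_on with
  | C a => simp [specX]
  | add p q hp hq => simp only [specX, map_add, Polynomial.eval_add] at *; rw [hp, hq]
  | mul_X p i h =>
      fin_cases i <;>
        simp only [specX, map_mul, Polynomial.eval_mul, MvPolynomial.aeval_X] at * <;>
        simp [h]

lemma specY_natDegree_lt (Q : MvPolynomial (Fin 2) ℝ) (y : ℝ) {k : ℕ} (hk : 0 < k)
    (hd : Q.degreeOf 0 < k) : (specY Q y).natDegree < k := by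
  have hsupp : ∀ d ∈ Q.support, d 0 < k := (MvPolynomial.degreeOf_lt_iff hk).mp hd
  rw [specY, MvPolynomial.aeval_def, MvPolynomial.eval₂_eq']
  calc (∑ d ∈ Q.support, algebraMap ℝ (Polynomial ℝ) (MvPolynomial.coeff d Q) *
          ∏ i, (![Polynomial.X, Polynomial.C y] i) ^ d i).natDegree
      ≤ k - 1 := by
        apply Polynomial.natDegree_sum_le_of_forall_le
        intro d hdm
        have : (algebraMap ℝ (Polynomial ℝ) (MvPolynomial.coeff d Q) *
            ∏ i, (![Polynomial.X, Polynomial.C y] i) ^ d i).natDegree ≤ d 0 := by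
          rw [Fin.prod_univ_two]
          simp only [Matrix.cons_val_zero, Matrix.cons_val_one, Matrix.head_cons,
            ← Polynomial.C_pow, Polynomial.algebraMap_eq]
          calc _ ≤ (Polynomial.C (MvPolynomial.coeff d Q)).natDegree +
                (Polynomial.X ^ d 0 * Polynomial.C (y ^ d 1)).natDegree :=
              Polynomial.natDegree_mul_le
          _ ≤ d 0 := by
              simp only [Polynomial.natDegree_C, zero_add]
              calc _ ≤ (Polynomial.X ^ d 0 : Polynomial ℝ).natDegree +
                  (Polynomial.C (y ^ d 1)).natDegree := Polynomial.natDegree_mul_le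
              _ ≤ d 0 := by simp
        exact this.trans (Nat.le_sub_one_of_lt (hsupp d hdm))
    _ < k := Nat.sub_lt hk one_pos

lemma specX_natDegree_lt (Q : MvPolynomial (Fin 2) ℝ) (x : ℝ) {k : ℕ} (hk : 0 < k)
    (hd : Q.degreeOf 1 < k) : (specX Q x).natDegree < k := by
  have hsupp : ∀ d ∈ Q.support, d 1 < k := (MvPolynomial.degreeOf_lt_iff hk).mp hd
  rw [specX, MvPolynomial.aeval_def, MvPolynomial.eval₂_eq']
  calc (∑ d ∈ Q.support, algebraMap ℝ (Polynomial ℝ) (MvPolynomial.coeff d Q) *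
          ∏ i, (![Polynomial.C x, Polynomial.X] i) ^ d i).natDegree
      ≤ k - 1 := by
        apply Polynomial.natDegree_sum_le_of_forall_le
        intro d hdm
        have : (algebraMap ℝ (Polynomial ℝ) (MvPolynomial.coeff d Q) *
            ∏ i, (![Polynomial.C x, Polynomial.X] i) ^ d i).natDegree ≤ d 1 := by
          rw [Fin.prod_univ_two]
          simp only [Matrix.cons_val_zero, Matrix.cons_val_one, Matrix.head_cons,
            ← Polynomial.C_pow, Polynomial.algebraMap_eq]
          calc _ ≤ (Polynomial.C (MvPolynomial.coeff d Q)).natDegree +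
                (Polynomial.C (x ^ d 0) * Polynomial.X ^ d 1).natDegree :=
              Polynomial.natDegree_mul_le
          _ ≤ d 1 := by
              simp only [Polynomial.natDegree_C, zero_add]
              calc _ ≤ (Polynomial.C (x ^ d 0)).natDegree +
                  (Polynomial.X ^ d 1 : Polynomial ℝ).natDegree := Polynomial.natDegree_mul_le
              _ ≤ d 1 := by simp
        exact this.trans (Nat.le_sub_one_of_lt (hsupp d hdm))
    _ < k := Nat.sub_lt hk one_pos

/-- If the mean of `φ` over the rectangle `I = I₁ × I₂` is at least `c₁ c₂ t`, where
`c₁, c₂` are constants satisfying the one-dimensional level-set lemma for polynomials of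
degrees `< k₁`, `< k₂` respectively, then the orthogonal projection `p` of `φ` onto
bivariate polynomials of degrees `< (k₁, k₂)` satisfies `|p| ≥ t` on a measurable set
`A ⊆ I` with `|A| ≥ |I|/4`. -/
theorem projection_large_on_big_set (k₁ k₂ : ℕ) (hk₁ : 0 < k₁) (hk₂ : 0 < k₂)
    (c₁ c₂ : ℝ) (hc₁0 : 0 < c₁) (hc₂0 : 0 < c₂)
    (hc₁ : ∀ a b : ℝ, a < b → ∀ Q : Polynomial ℝ, Q.natDegree < k₁ →
      ∀ s : ℝ, 0 < s → s ≤ sSup ((fun u => |Q.eval u|) '' Set.Icc a b) →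
        ENNReal.ofReal ((b - a) / 2) ≤ volume {x ∈ Set.Icc a b | s / c₁ < |Q.eval x|})
    (hc₂ : ∀ a b : ℝ, a < b → ∀ Q : Polynomial ℝ, Q.natDegree < k₂ →
      ∀ s : ℝ, 0 < s → s ≤ sSup ((fun u => |Q.eval u|) '' Set.Icc a b) →
        ENNReal.ofReal ((b - a) / 2) ≤ volume {x ∈ Set.Icc a b | s / c₂ < |Q.eval x|})
    (a₁ b₁ a₂ b₂ : ℝ) (h₁ : a₁ < b₁) (h₂ : a₂ < b₂)
    (I : Set (ℝ × ℝ)) (hI : I = Set.Icc a₁ b₁ ×ˢ Set.Icc a₂ b₂)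
    (φ : ℝ × ℝ → ℝ) (hφ : MemLp φ 2 (volume.restrict I))
    (t : ℝ) (ht : 0 < t)
    (hmean : c₁ * c₂ * t ≤ (∫ x in I, φ x) / (volume I).toReal)
    (p : ℝ × ℝ → ℝ) (hp : IsBivarPolyLt k₁ k₂ p)
    (horth : ∀ q : ℝ × ℝ → ℝ, IsBivarPolyLt k₁ k₂ q →
      ∫ x in I, (φ x - p x) * q x = 0) :
    ∃ A : Set (ℝ × ℝ), MeasurableSet A ∧ A ⊆ I ∧
      volume I / 4 ≤ volume A ∧ ∀ x ∈ A, t ≤ |p x| := by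
  obtain ⟨Q, hQ1, hQ2, hpQ⟩ := hp
  have hpz : ∀ z : ℝ × ℝ, p z = MvPolynomial.eval ![z.1, z.2] Q := fun z => by
    rw [← hpQ z.1 z.2]
  have hpc : Continuous p := by
    have h2 : Continuous fun z : ℝ × ℝ => MvPolynomial.eval ![z.1, z.2] Q := by
      apply Continuous.comp (MvPolynomial.continuous_eval (p := Q))
      refine continuous_pi fun i => ?_
      fin_cases i
      · exact continuous_fst
      · exact continuous_snd
    exact (funext hpz ▸ h2)
  -- basic facts about I
  have hIc : IsCompact I := hI ▸ (isCompact_Icc.prod isCompact_Icc)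
  have hIm : MeasurableSet I := hI ▸ ((measurableSet_Icc).prod measurableSet_Icc)
  have hIvol : volume I = ENNReal.ofReal (b₁ - a₁) * ENNReal.ofReal (b₂ - a₂) := by
    rw [hI, show (volume : Measure (ℝ × ℝ)) = (volume : Measure ℝ).prod volume from
      Measure.volume_eq_prod ℝ ℝ, Measure.prod_prod, Real.volume_Icc, Real.volume_Icc]
  have hIfin : volume I < ⊤ := hIc.measure_lt_top
  have hIpos : 0 < (volume I).toReal := by
    rw [hIvol, ENNReal.toReal_mul, ENNReal.toReal_ofReal (by linarith),
      ENNReal.toReal_ofReal (by linarith)]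
    nlinarith
  -- integrability and ∫ p = ∫ φ
  haveI : Fact (volume I < ⊤) := ⟨hIfin⟩
  have hφint : Integrable φ (volume.restrict I) := hφ.integrable one_le_two
  have hpint : Integrable p (volume.restrict I) := (hpc.continuousOn).integrableOn_compact hIc
  have hone : IsBivarPolyLt k₁ k₂ (fun _ => (1:ℝ)) := by
    refine ⟨1, ?_, ?_, by simp⟩
    · rw [← MvPolynomial.C_1, MvPolynomial.degreeOf_C]; exact hk₁
    · rw [← MvPolynomial.C_1, MvPolynomial.degreeOf_C]; exact hk₂
  have h1 := horth _ hone
  simp only [mul_one] at h1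
  rw [integral_sub hφint hpint, sub_eq_zero] at h1
  -- the level s
  set s : ℝ := c₁ * c₂ * t with hs_def
  have hs : 0 < s := by positivity
  have hPI : s * (volume I).toReal ≤ ∫ x in I, p x := by
    rw [← h1]
    have := (le_div_iff₀ hIpos).mp hmean
    linarith
  -- maximum point of |p| on I
  have hIne : I.Nonempty := ⟨(a₁, a₂), by
    rw [hI]; exact ⟨⟨le_refl _, h₁.le⟩, ⟨le_refl _, h₂.le⟩⟩⟩
  obtain ⟨z₀, hz₀I, hmax⟩ := hIc.exists_isMaxOn hIne (hpc.abs.continuousOn)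
  have hmax' : ∀ z ∈ I, |p z| ≤ |p z₀| := hmax
  -- s ≤ |p z₀|
  have hsz₀ : s ≤ |p z₀| := by
    by_contra hcon
    push_neg at hcon
    have hb : ‖∫ x in I, p x‖ ≤ |p z₀| * (volume I).toReal :=
      norm_setIntegral_le_of_norm_le_const (f := p) hIfin
        (fun x hx => by simpa using hmax' x hx)
    have : s * (volume I).toReal ≤ |p z₀| * (volume I).toReal :=
      hPI.trans ((le_abs_self _).trans hb)
    have := le_of_mul_le_mul_right this hIpos
    linarith
  obtain ⟨x₀, y₀⟩ := z₀
  have hx₀ : x₀ ∈ Set.Icc a₁ b₁ := ((hI ▸ hz₀I) : _ ∈ _ ×ˢ _).1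
  have hy₀ : y₀ ∈ Set.Icc a₂ b₂ := ((hI ▸ hz₀I) : _ ∈ _ ×ˢ _).2
  -- apply 1D lemma in x
  have hQy_deg := specY_natDegree_lt Q y₀ hk₁ hQ1
  have hQy_eval : ∀ x, (specY Q y₀).eval x = p (x, y₀) := fun x => by
    rw [specY_eval, hpQ]
  have hbdd1 : BddAbove ((fun u => |(specY Q y₀).eval u|) '' Set.Icc a₁ b₁) :=
    (isCompact_Icc.image_of_continuousOn
      ((specY Q y₀).continuous_aeval.abs.continuousOn)).bddAbove
  have hsup1 : s ≤ sSup ((fun u => |(specY Q y₀).eval u|) '' Set.Icc a₁ b₁) := by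
    refine le_trans ?_ (le_csSup hbdd1 ⟨x₀, hx₀, rfl⟩)
    show s ≤ |(specY Q y₀).eval x₀|
    rw [hQy_eval]; exact hsz₀
  have hE₁ := hc₁ a₁ b₁ h₁ _ hQy_deg s hs hsup1
  set E₁ : Set ℝ := {x ∈ Set.Icc a₁ b₁ | s / c₁ < |(specY Q y₀).eval x|} with hE₁def
  -- the set A
  set A : Set (ℝ × ℝ) := I ∩ {z | t ≤ |p z|} with hAdef
  have hAm : MeasurableSet A := by
    apply hIm.inter
    exact (isClosed_le continuous_const hpc.abs).measurableSet
  refine ⟨A, hAm, inter_subset_left, ?_, fun z hz => hz.2⟩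
  -- slice estimate
  have hslice : ∀ x ∈ E₁, ENNReal.ofReal ((b₂ - a₂) / 2) ≤ volume (Prod.mk x ⁻¹' A) := by
    intro x hx
    obtain ⟨hxI, hxgt⟩ := hx
    have hQx_deg := specX_natDegree_lt Q x hk₂ hQ2
    have hQx_eval : ∀ y, (specX Q x).eval y = p (x, y) := fun y => by
      rw [specX_eval, hpQ]
    have hs' : 0 < s / c₁ := by positivity
    have hbdd2 : BddAbove ((fun u => |(specX Q x).eval u|) '' Set.Icc a₂ b₂) :=
      (isCompact_Icc.image_of_continuousOn
        ((specX Q x).continuous_aeval.abs.continuousOn)).bddAbove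
    have hsup2 : s / c₁ ≤ sSup ((fun u => |(specX Q x).eval u|) '' Set.Icc a₂ b₂) := by
      refine le_trans ?_ (le_csSup hbdd2 ⟨y₀, hy₀, rfl⟩)
      show s / c₁ ≤ |(specX Q x).eval y₀|
      rw [hQx_eval]
      have : (specY Q y₀).eval x = p (x, y₀) := hQy_eval x
      rw [this] at hxgt
      exact hxgt.le
    have hE₂ := hc₂ a₂ b₂ h₂ _ hQx_deg (s / c₁) hs' hsup2
    refine le_trans hE₂ (measure_mono ?_)
    intro y hy
    obtain ⟨hyI, hygt⟩ := hy
    constructor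
    · rw [hI]; exact ⟨hxI, hyI⟩
    · show t ≤ |p (x, y)|
      rw [← hQx_eval]
      have hteq : s / c₁ / c₂ = t := by
        rw [hs_def]; field_simp
      rw [hteq] at hygt
      exact hygt.le
  -- Fubini
  have hAvol : volume A = ∫⁻ x, volume (Prod.mk x ⁻¹' A) := by
    rw [show (volume : Measure (ℝ × ℝ)) = (volume : Measure ℝ).prod volume from
      Measure.volume_eq_prod ℝ ℝ, Measure.prod_apply hAm]
  calc volume I / 4
      = ENNReal.ofReal ((b₁ - a₁) / 2) * ENNReal.ofReal ((b₂ - a₂) / 2) := by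
        rw [hIvol, ← ENNReal.ofReal_mul (by linarith), ← ENNReal.ofReal_mul (by linarith),
          show (b₁ - a₁) / 2 * ((b₂ - a₂) / 2) = (b₁ - a₁) * (b₂ - a₂) / 4 by ring,
          ENNReal.ofReal_div_of_pos (by norm_num)]
        norm_num
    _ ≤ volume E₁ * ENNReal.ofReal ((b₂ - a₂) / 2) := mul_le_mul_left hE₁ _
    _ = ∫⁻ _ in E₁, ENNReal.ofReal ((b₂ - a₂) / 2) := by
        rw [setLIntegral_const, mul_comm]
    _ ≤ ∫⁻ x in E₁, volume (Prod.mk x ⁻¹' A) := by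
        apply setLIntegral_mono (measurable_measure_prodMk_left hAm) hslice
    _ ≤ ∫⁻ x, volume (Prod.mk x ⁻¹' A) := setLIntegral_le_lintegral _ _
    _ = volume A := hAvol.symm
end

section
/- Let K : [0,1]^d × [0,1]^d → ℝ be a kernel and suppose there exist constants C > 0 and γ ∈ (0,1) and a partition of [0,1]^d into axis-parallel rectangles (I_i)_{1 ≤ i ≤ n} (multi-indexed) such that |K(x,y)| ≤ C γ^{|i−j|₁} / |I_{ij}| whenever x ∈ I_i, y ∈ I_j, where I_{ij} is the smallest axis-parallel rectangle containing both I_i and I_j. Then the integral operator Tf(x) = ∫ K(x,y) f(y) dy satisfies the pointwise bound |Tf(x)| ≤ C (∑_{j ∈ ℤ^d} γ^{|j|₁}) · M_S f(x) for all x ∈ [0,1]^d and integrable f. -/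
open MeasureTheory Set ENNReal

/-- The unit cube `[0,1]^d`. -/
def unitCube (d : ℕ) : Set (Fin d → ℝ) := Set.univ.pi fun _ => Set.Icc (0 : ℝ) 1

/-- The strong maximal function: supremum of averages of `|f|` over axis-parallel
rectangles `∏ [a μ, b μ] ⊆ [0,1]^d` containing `x`. -/
noncomputable def strongMaximal (d : ℕ) (f : (Fin d → ℝ) → ℝ) (x : Fin d → ℝ) : ℝ≥0∞ :=
  ⨆ (a : Fin d → ℝ) (b : Fin d → ℝ)
    (_ : ∀ μ, 0 ≤ a μ ∧ a μ < b μ ∧ b μ ≤ 1)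
    (_ : x ∈ Set.univ.pi fun μ => Set.Icc (a μ) (b μ)),
    (∫⁻ y in Set.univ.pi fun μ => Set.Icc (a μ) (b μ), ENNReal.ofReal |f y|) /
      volume (Set.univ.pi fun μ => Set.Icc (a μ) (b μ))

/-- The grid cell `I_i = ∏_μ [t_μ(i_μ), t_μ(i_μ + 1)]` of a tensor grid `t`. -/
def gridCell (d : ℕ) (t : Fin d → ℕ → ℝ) (i : Fin d → ℕ) : Set (Fin d → ℝ) :=
  Set.univ.pi fun μ => Set.Icc (t μ (i μ)) (t μ (i μ + 1))

/-- The envelope `I_{ij} = ∏_μ [t_μ(min(i_μ,j_μ)), t_μ(max(i_μ,j_μ)+1)]`, the smallest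
axis-parallel rectangle containing both `I_i` and `I_j`. -/
def gridEnvelope (d : ℕ) (t : Fin d → ℕ → ℝ) (i j : Fin d → ℕ) : Set (Fin d → ℝ) :=
  Set.univ.pi fun μ => Set.Icc (t μ (min (i μ) (j μ))) (t μ (max (i μ) (j μ) + 1))

/-- One-dimensional summability of the geometric weight `γ^{|k|}` over `ℤ`. -/
lemma geom_int_summable {γ : ℝ} (hγ0 : 0 ≤ γ) (hγ1 : γ < 1) :
    Summable fun k : ℤ => γ ^ k.natAbs := by
  have hnat : Summable fun m : ℕ => γ ^ m := summable_geometric_of_lt_one hγ0 hγ1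
  refine Summable.of_nat_of_neg ?_ ?_
  · simpa using hnat
  · simpa using hnat

set_option maxHeartbeats 1000000 in
/-- Summability of the geometric weight over `ℤ^d`. -/
lemma geom_pi_summable (d : ℕ) {γ : ℝ} (hγ0 : 0 ≤ γ) (hγ1 : γ < 1) :
    Summable fun j : Fin d → ℤ => γ ^ (∑ μ, (j μ).natAbs) := by
  have h1 := geom_int_summable hγ0 hγ1
  set S : ℝ := ∑' k : ℤ, γ ^ k.natAbs with hS
  refine summable_of_sum_le (c := S ^ d) (fun j => by positivity) (fun u => ?_)
  have hsub : u ⊆ Fintype.piFinset (fun μ => u.image (fun j => j μ)) := by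
    intro j hj
    rw [Fintype.mem_piFinset]
    exact fun μ => Finset.mem_image_of_mem _ hj
  calc ∑ j ∈ u, γ ^ (∑ μ, (j μ).natAbs)
      ≤ ∑ j ∈ Fintype.piFinset (fun μ => u.image (fun j => j μ)),
          γ ^ (∑ μ, (j μ).natAbs) := by
        refine Finset.sum_le_sum_of_subset_of_nonneg hsub (fun j _ _ => by positivity)
    _ = ∑ j ∈ Fintype.piFinset (fun μ => u.image (fun j => j μ)),
          ∏ μ, γ ^ (j μ).natAbs := by
        refine Finset.sum_congr rfl (fun j _ => ?_)
        rw [Finset.prod_pow_eq_pow_sum]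
    _ = ∏ μ, ∑ k ∈ u.image (fun j => j μ), γ ^ k.natAbs := by
        rw [Finset.prod_univ_sum]
    _ ≤ ∏ _μ : Fin d, S := by
        refine Finset.prod_le_prod (fun μ _ => Finset.sum_nonneg fun k _ => by positivity)
          (fun μ _ => h1.sum_le_tsum _ (fun k _ => by positivity))
    _ = S ^ d := by simp [Finset.prod_const]

/-- Existence of a grid interval containing a point of `[0,1]`. -/
lemma exists_cell_idx {n : ℕ} (hn : 0 < n) {t : ℕ → ℝ} (hm : Monotone t)
    (h0 : t 0 = 0) (h1 : t n = 1) {x : ℝ} (hx : x ∈ Set.Icc (0:ℝ) 1) :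
    ∃ k, k < n ∧ t k ≤ x ∧ x ≤ t (k+1) := by
  classical
  set S := (Finset.range n).filter (fun k => t k ≤ x) with hSdef
  have h0S : 0 ∈ S := by
    simp only [hSdef, Finset.mem_filter, Finset.mem_range]
    exact ⟨hn, by rw [h0]; exact hx.1⟩
  have hSne : S.Nonempty := ⟨0, h0S⟩
  set k := S.max' hSne with hk
  have hkS : k ∈ S := S.max'_mem hSne
  have hkn : k < n ∧ t k ≤ x := by
    simpa [hSdef, Finset.mem_filter, Finset.mem_range] using hkS
  refine ⟨k, hkn.1, hkn.2, ?_⟩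
  by_cases h : k + 1 < n
  · by_contra hlt
    push_neg at hlt
    have hmem : k + 1 ∈ S := by
      simp only [hSdef, Finset.mem_filter, Finset.mem_range]
      exact ⟨h, le_of_lt hlt⟩
    have := S.le_max' _ hmem
    omega
  · have hkn' : k + 1 = n := by omega
    rw [hkn', h1]; exact hx.2

lemma cell_subset_envelope_left (d : ℕ) (t : Fin d → ℕ → ℝ) (hmono : ∀ μ, Monotone (t μ))
    (i j : Fin d → ℕ) : gridCell d t i ⊆ gridEnvelope d t i j := by
  intro y hy μ _
  refine ⟨le_trans (hmono μ (min_le_left _ _)) (hy μ (mem_univ μ)).1,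
    le_trans (hy μ (mem_univ μ)).2 (hmono μ ?_)⟩
  exact Nat.succ_le_succ (le_max_left _ _)

lemma cell_subset_envelope_right (d : ℕ) (t : Fin d → ℕ → ℝ) (hmono : ∀ μ, Monotone (t μ))
    (i j : Fin d → ℕ) : gridCell d t j ⊆ gridEnvelope d t i j := by
  intro y hy μ _
  refine ⟨le_trans (hmono μ (min_le_right _ _)) (hy μ (mem_univ μ)).1,
    le_trans (hy μ (mem_univ μ)).2 (hmono μ ?_)⟩
  exact Nat.succ_le_succ (le_max_right _ _)

/-- If a kernel `K` on `[0,1]^d × [0,1]^d` satisfies the geometric-decay bound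
`|K(x,y)| ≤ C γ^{|i-j|₁} / |I_{ij}|` for `x ∈ I_i`, `y ∈ I_j` with respect to a tensor
grid partition of the unit cube, then the associated integral operator is pointwise
dominated by `C (∑_{j ∈ ℤ^d} γ^{|j|₁}) · M_S f`. -/
theorem kernel_decay_pointwise_bound (d : ℕ) (hd : 0 < d)
    (n : Fin d → ℕ) (hn : ∀ μ, 0 < n μ) (t : Fin d → ℕ → ℝ)
    (hmono : ∀ μ, Monotone (t μ)) (h0 : ∀ μ, t μ 0 = 0) (h1 : ∀ μ, t μ (n μ) = 1)
    (K : (Fin d → ℝ) → (Fin d → ℝ) → ℝ) (hK : Measurable (Function.uncurry K))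
    (C γ : ℝ) (hC : 0 < C) (hγ0 : 0 < γ) (hγ1 : γ < 1)
    (hbound : ∀ i j : Fin d → ℕ, (∀ μ, i μ < n μ) → (∀ μ, j μ < n μ) →
      ∀ x ∈ gridCell d t i, ∀ y ∈ gridCell d t j,
        |K x y| ≤ C * γ ^ (∑ μ, ((i μ : ℤ) - j μ).natAbs) /
          (volume (gridEnvelope d t i j)).toReal) :
    ∀ f : (Fin d → ℝ) → ℝ, IntegrableOn f (unitCube d) →
      ∀ x ∈ unitCube d,
        ENNReal.ofReal |∫ y in unitCube d, K x y * f y| ≤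
          ENNReal.ofReal (C * ∑' j : Fin d → ℤ, γ ^ (∑ μ, (j μ).natAbs)) *
            strongMaximal d f x := by
  classical
  intro f hf x hx
  -- choose the cell containing x
  have hex : ∀ μ, ∃ k, k < n μ ∧ t μ k ≤ x μ ∧ x μ ≤ t μ (k+1) :=
    fun μ => exists_cell_idx (hn μ) (hmono μ) (h0 μ) (h1 μ) (hx μ (mem_univ μ))
  choose i hi hile hige using hex
  have hxi : x ∈ gridCell d t i := fun μ _ => ⟨hile μ, hige μ⟩
  set F : Finset (Fin d → ℕ) := Fintype.piFinset fun μ => Finset.range (n μ) with hF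
  set M := strongMaximal d f x with hM
  -- the cells cover the cube
  have hcover : unitCube d ⊆ ⋃ j ∈ F, gridCell d t j := by
    intro y hy
    have hey : ∀ μ, ∃ k, k < n μ ∧ t μ k ≤ y μ ∧ y μ ≤ t μ (k+1) :=
      fun μ => exists_cell_idx (hn μ) (hmono μ) (h0 μ) (h1 μ) (hy μ (mem_univ μ))
    choose j hj1 hj2 hj3 using hey
    have hjF : j ∈ F := by
      rw [hF, Fintype.mem_piFinset]
      exact fun μ => Finset.mem_range.2 (hj1 μ)
    exact Set.mem_biUnion hjF (fun μ _ => ⟨hj2 μ, hj3 μ⟩)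
  have hmeas : ∀ j : Fin d → ℕ, MeasurableSet (gridCell d t j) :=
    fun j => MeasurableSet.univ_pi fun μ => measurableSet_Icc
  -- step 1 : bound by the lintegral of the absolute value
  have step1 : ENNReal.ofReal |∫ y in unitCube d, K x y * f y| ≤
      ∫⁻ y in unitCube d, ENNReal.ofReal (|K x y| * |f y|) := by
    calc ENNReal.ofReal |∫ y in unitCube d, K x y * f y|
        = (‖∫ y in unitCube d, K x y * f y‖₊ : ℝ≥0∞) := by
          rw [← Real.norm_eq_abs, ofReal_norm, enorm_eq_nnnorm]
      _ ≤ ∫⁻ y in unitCube d, (‖K x y * f y‖₊ : ℝ≥0∞) :=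
          enorm_integral_le_lintegral_enorm _
      _ = ∫⁻ y in unitCube d, ENNReal.ofReal (|K x y| * |f y|) := by
          refine lintegral_congr fun y => ?_
          rw [← abs_mul, ← Real.norm_eq_abs, ofReal_norm, enorm_eq_nnnorm]
  -- step 2 : split into cells
  have step2 : ∫⁻ y in unitCube d, ENNReal.ofReal (|K x y| * |f y|) ≤
      ∑ j ∈ F, ∫⁻ y in gridCell d t j, ENNReal.ofReal (|K x y| * |f y|) := by
    calc ∫⁻ y in unitCube d, ENNReal.ofReal (|K x y| * |f y|)
        ≤ ∫⁻ y in ⋃ j ∈ F, gridCell d t j, ENNReal.ofReal (|K x y| * |f y|) :=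
          lintegral_mono_set hcover
      _ ≤ ∑ j ∈ F, ∫⁻ y in gridCell d t j, ENNReal.ofReal (|K x y| * |f y|) := by
          clear hcover
          induction F using Finset.induction with
          | empty => simp
          | insert _ _ hnotmem ih =>
            rw [Finset.set_biUnion_insert, Finset.sum_insert hnotmem]
            exact le_trans (lintegral_union_le _ _ _) (add_le_add le_rfl ih)
  -- step 3 : per-cell bound
  have step3 : ∀ j ∈ F, ∫⁻ y in gridCell d t j, ENNReal.ofReal (|K x y| * |f y|) ≤
      ENNReal.ofReal (C * γ ^ (∑ μ, ((i μ : ℤ) - j μ).natAbs)) * M := by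
    intro j hjF
    have hjlt : ∀ μ, j μ < n μ := by
      rw [hF, Fintype.mem_piFinset] at hjF
      exact fun μ => Finset.mem_range.1 (hjF μ)
    set s : ℕ := ∑ μ, ((i μ : ℤ) - j μ).natAbs with hs
    set env := gridEnvelope d t i j with henv
    set B : ℝ := C * γ ^ s / (volume env).toReal with hB
    have hBnn : 0 ≤ B := div_nonneg (by positivity) ENNReal.toReal_nonneg
    have hKle : ∀ y ∈ gridCell d t j, |K x y| ≤ B :=
      fun y hy => hbound i j hi hjlt x hxi y hy
    have hsubr : gridCell d t j ⊆ env := cell_subset_envelope_right d t hmono i j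
    have hsubl : gridCell d t i ⊆ env := cell_subset_envelope_left d t hmono i j
    by_cases hz : volume env = 0
    · have hzero : volume (gridCell d t j) = 0 :=
        le_antisymm (le_trans (measure_mono hsubr) (le_of_eq hz)) zero_le
      rw [setLIntegral_measure_zero _ _ hzero]
      exact zero_le
    · -- the envelope is an admissible rectangle
      set a : Fin d → ℝ := fun μ => t μ (min (i μ) (j μ)) with ha
      set b : Fin d → ℝ := fun μ => t μ (max (i μ) (j μ) + 1) with hb
      have henv' : env = Set.univ.pi fun μ => Set.Icc (a μ) (b μ) := rfl
      have hvol : volume env = ∏ μ, ENNReal.ofReal (b μ - a μ) := by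
        rw [henv', Set.pi_univ_Icc, Real.volume_Icc_pi]
      have hvol_ne_top : volume env ≠ ⊤ := by
        rw [hvol]
        exact ENNReal.prod_ne_top fun μ _ => ofReal_ne_top
      have hab : ∀ μ, 0 ≤ a μ ∧ a μ < b μ ∧ b μ ≤ 1 := by
        intro μ
        have hpos : a μ < b μ := by
          by_contra hle
          push_neg at hle
          apply hz
          rw [hvol]
          refine Finset.prod_eq_zero (Finset.mem_univ μ) ?_
          rw [ENNReal.ofReal_eq_zero]
          linarith
        refine ⟨?_, hpos, ?_⟩
        · rw [ha, ← h0 μ]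
          exact hmono μ (Nat.zero_le _)
        · rw [hb, ← h1 μ]
          exact hmono μ (by have := hjlt μ; have := hi μ; omega)
      have hxenv : x ∈ Set.univ.pi fun μ => Set.Icc (a μ) (b μ) := by
        rw [← henv']; exact hsubl hxi
      have havg : (∫⁻ y in env, ENNReal.ofReal |f y|) / volume env ≤ M := by
        rw [hM, strongMaximal]
        exact le_iSup_of_le a (le_iSup_of_le b (le_iSup_of_le hab
          (le_iSup_of_le hxenv le_rfl)))
      have hvolpos : 0 < (volume env).toReal :=
        ENNReal.toReal_pos hz hvol_ne_top
      have hBof : ENNReal.ofReal B = ENNReal.ofReal (C * γ ^ s) / volume env := by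
        rw [hB, ENNReal.ofReal_div_of_pos hvolpos, ENNReal.ofReal_toReal hvol_ne_top]
      calc ∫⁻ y in gridCell d t j, ENNReal.ofReal (|K x y| * |f y|)
          ≤ ∫⁻ y in gridCell d t j, ENNReal.ofReal B * ENNReal.ofReal |f y| := by
            refine setLIntegral_mono' (hmeas j) fun y hy => ?_
            rw [← ENNReal.ofReal_mul hBnn]
            exact ENNReal.ofReal_le_ofReal
              (mul_le_mul_of_nonneg_right (hKle y hy) (abs_nonneg _))
        _ = ENNReal.ofReal B * ∫⁻ y in gridCell d t j, ENNReal.ofReal |f y| :=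
            lintegral_const_mul' _ _ ofReal_ne_top
        _ ≤ ENNReal.ofReal B * ∫⁻ y in env, ENNReal.ofReal |f y| := by
            exact mul_le_mul_right (lintegral_mono_set hsubr) _
        _ = ENNReal.ofReal (C * γ ^ s) *
              ((∫⁻ y in env, ENNReal.ofReal |f y|) / volume env) := by
            rw [hBof, div_eq_mul_inv, div_eq_mul_inv]; ring
        _ ≤ ENNReal.ofReal (C * γ ^ s) * M := mul_le_mul_right havg _
  -- step 4 : sum the geometric weights
  have step4 : ∑ j ∈ F, ENNReal.ofReal (C * γ ^ (∑ μ, ((i μ : ℤ) - j μ).natAbs)) ≤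
      ENNReal.ofReal (C * ∑' j : Fin d → ℤ, γ ^ (∑ μ, (j μ).natAbs)) := by
    rw [← ENNReal.ofReal_sum_of_nonneg (fun j _ => by positivity)]
    refine ENNReal.ofReal_le_ofReal ?_
    rw [← Finset.mul_sum]
    refine mul_le_mul_of_nonneg_left ?_ hC.le
    set e : (Fin d → ℕ) → (Fin d → ℤ) := fun j μ => (i μ : ℤ) - j μ with he
    have hinj : ∀ j1 ∈ F, ∀ j2 ∈ F, e j1 = e j2 → j1 = j2 := by
      intro j1 _ j2 _ h
      funext μ
      have := congrFun h μ
      simp only [he] at this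
      omega
    calc ∑ j ∈ F, γ ^ (∑ μ, ((i μ : ℤ) - j μ).natAbs)
        = ∑ k ∈ F.image e, γ ^ (∑ μ, (k μ).natAbs) := by
          rw [Finset.sum_image hinj]
      _ ≤ ∑' k : Fin d → ℤ, γ ^ (∑ μ, (k μ).natAbs) :=
          (geom_pi_summable d hγ0.le hγ1).sum_le_tsum _ (fun k _ => by positivity)
  -- assemble
  calc ENNReal.ofReal |∫ y in unitCube d, K x y * f y|
      ≤ ∫⁻ y in unitCube d, ENNReal.ofReal (|K x y| * |f y|) := step1
    _ ≤ ∑ j ∈ F, ∫⁻ y in gridCell d t j, ENNReal.ofReal (|K x y| * |f y|) := step2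
    _ ≤ ∑ j ∈ F, ENNReal.ofReal (C * γ ^ (∑ μ, ((i μ : ℤ) - j μ).natAbs)) * M :=
        Finset.sum_le_sum step3
    _ = (∑ j ∈ F, ENNReal.ofReal (C * γ ^ (∑ μ, ((i μ : ℤ) - j μ).natAbs))) * M :=
        (Finset.sum_mul _ _ _).symm
    _ ≤ ENNReal.ofReal (C * ∑' j : Fin d → ℤ, γ ^ (∑ μ, (j μ).natAbs)) * M :=
        mul_le_mul_left step4 _
end
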